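/- Let ψ₁ be a Schwartz function on ℝ with 0 ≤ ψ₁ ≤ 1 and support a compact subset of (0,1), and let ψ(y) = ψ₁(y) − ψ₁(−y). For the sign function sgn, define V_ψ sgn(ξ,t) = ∫_ℝ sgn(y) e^{−2πi y t} ψ(y−ξ) dy. Then for every r > 1 there is a finite constant C (depending only on ψ₁ and r) such that sup_{ξ∈ℝ} (∫_ℝ |V_ψ sgn(ξ,t)|^r dt)^{1/r} ≤ C. -/

import Mathlib

open MeasureTheory Complex
open scoped ENNReal NNReal

noncomputable section

/-- `e2pi a = e^{2πi a}`. -/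
def e2pi (a : ℝ) : ℂ := Complex.exp (2 * Real.pi * Complex.I * (a : ℂ))

/-- Short-time Fourier transform on `ℝ`: `V_φ f (t, ν)`. -/
def STFT1 (φ f : ℝ → ℂ) (t ν : ℝ) : ℂ := ∫ y : ℝ, f y * e2pi (-(y * ν)) * φ (y - t)

/-- The Gaussian window `e^{-x²}` on `ℝ`. -/
def gauss1 : ℝ → ℂ := fun x => (Real.exp (-x ^ 2) : ℝ)

/-- `L^p`-type norm (`ℝ≥0∞`-valued) with essential supremum in case `p = ∞`. -/
def eNorm {α : Type*} [MeasurableSpace α] (μ : Measure α) (p : ℝ≥0∞) (F : α → ℝ≥0∞) : ℝ≥0∞ :=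
  if p = ∞ then essSup F μ else (∫⁻ a, F a ^ p.toReal ∂μ) ^ (1 / p.toReal)

/-- Modulation space norm `‖f‖_{M^{p,q}}` on `ℝ` with the Gaussian window. -/
def modNorm1 (p q : ℝ≥0∞) (f : ℝ → ℂ) : ℝ≥0∞ :=
  eNorm volume q fun ν => eNorm volume p fun t => (‖STFT1 gauss1 f t ν‖₊ : ℝ≥0∞)

/-- Fourier transform on `ℝ`. -/
def FT1 (f : ℝ → ℂ) (ξ : ℝ) : ℂ := ∫ y : ℝ, f y * e2pi (-(y * ξ))

/-- Symbol short-time Fourier transform of a symbol on `ℝ³`. -/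
def symbSTFT3 (Ψ σ : ℝ × ℝ × ℝ → ℂ) (x t₁ t₂ ξ₁ ξ₂ ν : ℝ) : ℂ :=
  ∫ X : ℝ × ℝ × ℝ, σ X * Ψ (X.1 - x, X.2.1 - ξ₁, X.2.2 - ξ₂) *
    e2pi (-(X.1 * ν - t₁ * X.2.1 - t₂ * X.2.2))

/-- Symbol short-time Fourier transform of a symbol on `ℝ⁴`. -/
def symbSTFT4 (Ψ σ : ℝ × ℝ × ℝ × ℝ → ℂ) (x t₁ t₂ t₃ ξ₁ ξ₂ ξ₃ ν : ℝ) : ℂ :=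
  ∫ X : ℝ × ℝ × ℝ × ℝ, σ X * Ψ (X.1 - x, X.2.1 - ξ₁, X.2.2.1 - ξ₂, X.2.2.2 - ξ₃) *
    e2pi (-(X.1 * ν - t₁ * X.2.1 - t₂ * X.2.2.1 - t₃ * X.2.2.2))

/-- The bilinear Hilbert transform as an (absolutely convergent) bilinear Fourier
multiplier for Schwartz functions. -/
def BH (f g : ℝ → ℂ) (x : ℝ) : ℂ :=
  ∫ ξ : ℝ × ℝ, (-(Real.pi : ℂ) * Complex.I * (Real.sign (ξ.1 - ξ.2) : ℝ)) *
    FT1 f ξ.1 * FT1 g ξ.2 * e2pi (x * (ξ.1 + ξ.2))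

/-- The trilinear Hilbert transform as an (absolutely convergent) trilinear Fourier
multiplier for Schwartz functions. -/
def TH (f g h : ℝ → ℂ) (x : ℝ) : ℂ :=
  ∫ ξ : ℝ × ℝ × ℝ, ((Real.pi : ℂ) * Complex.I * (Real.sign (ξ.1 - ξ.2.1 - 2 * ξ.2.2) : ℝ)) *
    FT1 f ξ.1 * FT1 g ξ.2.1 * FT1 h ξ.2.2 * e2pi (x * (ξ.1 + ξ.2.1 + ξ.2.2))

/-- `V_ψ sgn (ξ, t) = ∫ sgn(y) e^{−2πi y t} ψ(y−ξ) dy`. -/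
def Vsgn (ψ : ℝ → ℂ) (ξ t : ℝ) : ℂ :=
  ∫ y : ℝ, ((Real.sign y : ℝ) : ℂ) * e2pi (-(y * t)) * ψ (y - ξ)

lemma norm_e2pi (a : ℝ) : ‖e2pi a‖ = 1 := by
  rw [e2pi, show (2 * (Real.pi:ℂ) * Complex.I * (a:ℂ))
      = ((2 * Real.pi * a : ℝ) : ℂ) * Complex.I by push_cast; ring]
  exact Complex.norm_exp_ofReal_mul_I _

lemma measurable_realSign : Measurable Real.sign := by
  unfold Real.sign
  exact Measurable.ite (measurableSet_lt measurable_id measurable_const) measurable_const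
    (Measurable.ite (measurableSet_lt measurable_const measurable_id) measurable_const
      measurable_const)

lemma abs_realSign_le (y : ℝ) : |Real.sign y| ≤ 1 := by
  rcases Real.sign_apply_eq y with h | h | h <;> rw [h] <;> norm_num

lemma ibp_Ioi (c : ℂ) (φ dφ : ℝ → ℂ) (hφ : ∀ y, HasDerivAt φ (dφ y) y)
    (hφc : Continuous φ) (hdφc : Continuous dφ)
    (hφs : HasCompactSupport φ) (hdφs : HasCompactSupport dφ) :
    c * ∫ y in Set.Ioi (0:ℝ), Complex.exp (c * y) * φ y
      = -φ 0 - ∫ y in Set.Ioi (0:ℝ), Complex.exp (c * y) * dφ y := by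
  have hexp : ∀ y : ℝ, HasDerivAt (fun x : ℝ => Complex.exp (c * x))
      (c * Complex.exp (c * y)) y := by
    intro y
    have h1 : HasDerivAt (fun z : ℂ => Complex.exp (c * z)) (c * Complex.exp (c * (y:ℂ)))
        (y:ℂ) := by
      simpa [mul_comm, Function.comp_def] using
        (Complex.hasDerivAt_exp (c * (y:ℂ))).comp (y:ℂ) ((hasDerivAt_id (y:ℂ)).const_mul c)
    exact h1.comp_ofReal
  have hEcont : Continuous fun x : ℝ => Complex.exp (c * x) :=
    Complex.continuous_exp.comp (continuous_const.mul Complex.continuous_ofReal)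
  have hEφs : HasCompactSupport (fun x : ℝ => Complex.exp (c * x) * φ x) := hφs.mul_left
  have hEdφs : HasCompactSupport (fun x : ℝ => Complex.exp (c * x) * dφ x) := hdφs.mul_left
  have hEφint : Integrable fun x : ℝ => Complex.exp (c * x) * φ x :=
    (hEcont.mul hφc).integrable_of_hasCompactSupport hEφs
  have hEdφint : Integrable fun x : ℝ => Complex.exp (c * x) * dφ x :=
    (hEcont.mul hdφc).integrable_of_hasCompactSupport hEdφs
  have htend : Filter.Tendsto (fun x : ℝ => Complex.exp (c * x) * φ x) Filter.atTop (nhds 0) := by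
    rw [hasCompactSupport_iff_eventuallyEq, Filter.coclosedCompact_eq_cocompact] at hEφs
    exact (hEφs.filter_mono atTop_le_cocompact).tendsto
  have key := integral_Ioi_of_hasDerivAt_of_tendsto'
    (f := fun x : ℝ => Complex.exp (c * x) * φ x)
    (f' := fun y : ℝ => c * Complex.exp (c * y) * φ y + Complex.exp (c * y) * dφ y)
    (a := 0) (m := 0)
    (fun y _ => (hexp y).mul (hφ y))
    (by
      have : Integrable fun y : ℝ =>
          c * Complex.exp (c * y) * φ y + Complex.exp (c * y) * dφ y := by
        simpa [mul_assoc, Pi.add_def] using (hEφint.const_mul c).add hEdφint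
      exact this.integrableOn)
    htend
  simp only [mul_assoc] at key
  rw [integral_add ((hEφint.const_mul c).integrableOn) hEdφint.integrableOn,
    integral_const_mul _] at key
  simp only [Complex.ofReal_zero, mul_zero, Complex.exp_zero, one_mul, zero_sub] at key
  rw [show c * ∫ y in Set.Ioi (0:ℝ), Complex.exp (c * y) * φ y
      = c * ∫ y in Set.Ioi (0:ℝ), Complex.exp (c * ↑y) * φ y from rfl]
  linear_combination key

lemma ibp_Iic (c : ℂ) (φ dφ : ℝ → ℂ) (hφ : ∀ y, HasDerivAt φ (dφ y) y)
    (hφc : Continuous φ) (hdφc : Continuous dφ)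
    (hφs : HasCompactSupport φ) (hdφs : HasCompactSupport dφ) :
    c * ∫ y in Set.Iic (0:ℝ), Complex.exp (c * y) * φ y
      = φ 0 - ∫ y in Set.Iic (0:ℝ), Complex.exp (c * y) * dφ y := by
  have hexp : ∀ y : ℝ, HasDerivAt (fun x : ℝ => Complex.exp (c * x))
      (c * Complex.exp (c * y)) y := by
    intro y
    have h1 : HasDerivAt (fun z : ℂ => Complex.exp (c * z)) (c * Complex.exp (c * (y:ℂ)))
        (y:ℂ) := by
      simpa [mul_comm, Function.comp_def] using
        (Complex.hasDerivAt_exp (c * (y:ℂ))).comp (y:ℂ) ((hasDerivAt_id (y:ℂ)).const_mul c)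
    exact h1.comp_ofReal
  have hEcont : Continuous fun x : ℝ => Complex.exp (c * x) :=
    Complex.continuous_exp.comp (continuous_const.mul Complex.continuous_ofReal)
  have hEφs : HasCompactSupport (fun x : ℝ => Complex.exp (c * x) * φ x) := hφs.mul_left
  have hEdφs : HasCompactSupport (fun x : ℝ => Complex.exp (c * x) * dφ x) := hdφs.mul_left
  have hEφint : Integrable fun x : ℝ => Complex.exp (c * x) * φ x :=
    (hEcont.mul hφc).integrable_of_hasCompactSupport hEφs
  have hEdφint : Integrable fun x : ℝ => Complex.exp (c * x) * dφ x :=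
    (hEcont.mul hdφc).integrable_of_hasCompactSupport hEdφs
  have htend : Filter.Tendsto (fun x : ℝ => Complex.exp (c * x) * φ x) Filter.atBot (nhds 0) := by
    rw [hasCompactSupport_iff_eventuallyEq, Filter.coclosedCompact_eq_cocompact] at hEφs
    exact (hEφs.filter_mono atBot_le_cocompact).tendsto
  have key := integral_Iic_of_hasDerivAt_of_tendsto'
    (f := fun x : ℝ => Complex.exp (c * x) * φ x)
    (f' := fun y : ℝ => c * Complex.exp (c * y) * φ y + Complex.exp (c * y) * dφ y)
    (a := 0) (m := 0)
    (fun y _ => (hexp y).mul (hφ y))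
    (by
      have : Integrable fun y : ℝ =>
          c * Complex.exp (c * y) * φ y + Complex.exp (c * y) * dφ y := by
        simpa [mul_assoc, Pi.add_def] using (hEφint.const_mul c).add hEdφint
      exact this.integrableOn)
    htend
  simp only [mul_assoc] at key
  rw [integral_add ((hEφint.const_mul c).integrableOn) hEdφint.integrableOn,
    integral_const_mul _] at key
  simp only [Complex.ofReal_zero, mul_zero, Complex.exp_zero, one_mul, sub_zero] at key
  rw [show c * ∫ y in Set.Iic (0:ℝ), Complex.exp (c * y) * φ y
      = c * ∫ y in Set.Iic (0:ℝ), Complex.exp (c * ↑y) * φ y from rfl]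
  linear_combination key


/-- uniform bound `sup_ξ ‖V_ψ sgn (ξ, ·)‖_{L^r} ≤ C < ∞` for every `r > 1`. -/
theorem stmt13 (ψ₁ : SchwartzMap ℝ ℝ)
    (hpos : ∀ y, 0 ≤ ψ₁ y) (hle : ∀ y, ψ₁ y ≤ 1)
    (hsupp : tsupport (⇑ψ₁) ⊆ Set.Ioo 0 1)
    (ψ : ℝ → ℂ) (hψ : ψ = fun y => ((ψ₁ y - ψ₁ (-y) : ℝ) : ℂ))
    (r : ℝ) (hr : 1 < r) :
    ∃ C : ℝ≥0∞, C < ∞ ∧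
      ∀ ξ : ℝ, (∫⁻ t : ℝ, (‖Vsgn ψ ξ t‖₊ : ℝ≥0∞) ^ r) ^ (1 / r) ≤ C := by
  have pi_pos := Real.pi_pos
  set ψr : ℝ → ℝ := fun y => ψ₁ y - ψ₁ (-y) with hψr
  have hψval : ∀ s : ℝ, ψ s = ((ψr s : ℝ) : ℂ) := by intro s; rw [hψ]
  have hψrsmooth : ContDiff ℝ ((⊤ : ℕ∞) : ℕ∞) ψr := by
    rw [hψr]
    exact (ψ₁.smooth ⊤).sub ((ψ₁.smooth ⊤).comp contDiff_neg)
  have hψrcont : Continuous ψr := hψrsmooth.continuous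
  have hψ₁0 : ∀ y, y ∉ Set.Ioo (0:ℝ) 1 → ψ₁ y = 0 := fun y hy =>
    image_eq_zero_of_notMem_tsupport (fun h => hy (hsupp h))
  have hψr0 : ∀ y : ℝ, 1 ≤ |y| → ψr y = 0 := by
    intro y hy
    have h1 : ψ₁ y = 0 := by
      apply hψ₁0; rintro ⟨a, b⟩
      rw [abs_of_pos a] at hy; linarith
    have h2 : ψ₁ (-y) = 0 := by
      apply hψ₁0; rintro ⟨a, b⟩
      rw [abs_of_neg (by linarith : y < 0)] at hy; linarith
    simp [hψr, h1, h2]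
  have hIcc : ∀ (a r' z : ℝ), z ∉ Set.Icc (a - r') (a + r') → r' < |z - a| := by
    intro a r' z hz
    rw [Set.mem_Icc, not_and_or, not_le, not_le] at hz
    rcases hz with h | h
    · rw [lt_abs]; right; linarith
    · rw [lt_abs]; left; linarith
  have hψrs : HasCompactSupport ψr := by
    apply HasCompactSupport.intro (isCompact_Icc (a := (-1:ℝ)) (b := 1))
    intro y hy
    apply hψr0
    have := hIcc 0 1 y (by simpa [zero_sub, zero_add] using hy)
    simpa using this.le
  set dψ : ℝ → ℝ := deriv ψr with hdψdef
  have hdψcont : Continuous dψ := hψrsmooth.continuous_deriv (by exact_mod_cast le_top)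
  have hψrderiv : ∀ y, HasDerivAt ψr (dψ y) y :=
    fun y => (hψrsmooth.differentiable (by simp) y).hasDerivAt
  have hsupp' : Function.support ψr ⊆ Set.Icc (-1 : ℝ) 1 := by
    intro y hy
    by_contra h
    exact hy (hψr0 y (by simpa using (hIcc 0 1 y (by simpa [zero_sub, zero_add] using h)).le))
  have htsup : tsupport ψr ⊆ Set.Icc (-1 : ℝ) 1 := closure_minimal hsupp' isClosed_Icc
  have hdψ0 : ∀ y : ℝ, y ∉ Set.Icc (-1:ℝ) 1 → dψ y = 0 := by
    intro y hy
    have h0 : ψr =ᶠ[nhds y] 0 :=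
      notMem_tsupport_iff_eventuallyEq.1 (fun h => hy (htsup h))
    rw [hdψdef, h0.deriv_eq]
    exact deriv_const _ _
  have hψabs : ∀ y, ‖ψr y‖ ≤ 1 := by
    intro y
    have h : ψr y = ψ₁ y - ψ₁ (-y) := rfl
    rw [Real.norm_eq_abs, h, abs_le]
    constructor <;> nlinarith [hpos y, hle y, hpos (-y), hle (-y)]
  -- integrals of norms
  have hψrnormint : Integrable (fun y => ‖ψr y‖) := by
    exact (hψrcont.norm).integrable_of_hasCompactSupport hψrs.norm
  have hdψnormint : Integrable (fun y => ‖dψ y‖) := by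
    exact (hdψcont.norm).integrable_of_hasCompactSupport hψrs.deriv.norm
  set B : ℝ := ∫ y : ℝ, ‖ψr y‖ with hB
  set M : ℝ := ∫ y : ℝ, ‖dψ y‖ with hM
  have hB0 : 0 ≤ B := integral_nonneg fun y => norm_nonneg _
  have hM0 : 0 ≤ M := integral_nonneg fun y => norm_nonneg _
  -- the integrand is integrable, with norm bounds
  have hEcont : ∀ t : ℝ, Continuous fun y : ℝ => e2pi (-(y * t)) := by
    intro t; unfold e2pi; fun_prop
  have hφint : ∀ ξ : ℝ, Integrable (fun y : ℝ => ‖ψr (y - ξ)‖) :=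
    fun ξ => hψrnormint.comp_sub_right ξ
  have hfmeas : ∀ ξ t : ℝ, AEStronglyMeasurable
      (fun y : ℝ => ((Real.sign y : ℝ) : ℂ) * e2pi (-(y * t)) * ψ (y - ξ)) volume := by
    intro ξ t
    have heq : (fun y : ℝ => ψ (y - ξ)) = fun y : ℝ => ((ψr (y - ξ) : ℝ) : ℂ) := by
      funext y; rw [hψval]
    apply Measurable.aestronglyMeasurable
    apply Measurable.mul
    · exact (Complex.measurable_ofReal.comp measurable_realSign).mul (hEcont t).measurable
    · show Measurable fun y : ℝ => ψ (y - ξ)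
      rw [heq]
      exact (Complex.continuous_ofReal.comp
        (hψrcont.comp (continuous_id.sub continuous_const))).measurable
  have hfint : ∀ ξ t : ℝ, Integrable
      (fun y : ℝ => ((Real.sign y : ℝ) : ℂ) * e2pi (-(y * t)) * ψ (y - ξ)) := by
    intro ξ t
    apply Integrable.mono' (hφint ξ) (hfmeas ξ t)
    filter_upwards with y
    rw [hψval, norm_mul, norm_mul, norm_e2pi, Complex.norm_real, Complex.norm_real]
    have h1 : ‖Real.sign y‖ ≤ 1 := by rw [Real.norm_eq_abs]; exact abs_realSign_le y
    nlinarith [h1, norm_nonneg (Real.sign y), norm_nonneg (ψr (y - ξ))]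
  have hbnd1 : ∀ ξ t : ℝ, ‖Vsgn ψ ξ t‖ ≤ B := by
    intro ξ t
    have hle1 : ‖Vsgn ψ ξ t‖ ≤ ∫ y : ℝ, ‖ψr (y - ξ)‖ := by
      rw [Vsgn]
      apply norm_integral_le_of_norm_le (hφint ξ)
      filter_upwards with y
      rw [hψval, norm_mul, norm_mul, norm_e2pi, Complex.norm_real, Complex.norm_real]
      have h1 : ‖Real.sign y‖ ≤ 1 := by rw [Real.norm_eq_abs]; exact abs_realSign_le y
      nlinarith [h1, norm_nonneg (Real.sign y), norm_nonneg (ψr (y - ξ))]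
    rwa [integral_sub_right_eq_self (fun y : ℝ => ‖ψr y‖) ξ] at hle1
  have hbnd2 : ∀ ξ t : ℝ, t ≠ 0 → ‖Vsgn ψ ξ t‖ ≤ (2 + 2 * M) / (2 * Real.pi * |t|) := by
    intro ξ t ht
    set c : ℂ := 2 * (Real.pi : ℂ) * Complex.I * (-(t : ℂ)) with hcdef
    have hEeq : ∀ y : ℝ, e2pi (-(y * t)) = Complex.exp (c * y) := by
      intro y; rw [e2pi, hcdef]; congr 1; push_cast; ring
    have hcnorm : ‖c‖ = 2 * Real.pi * |t| := by
      simp [hcdef, Complex.norm_real, abs_of_pos pi_pos, Real.norm_eq_abs]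
    have hct : (0:ℝ) < 2 * Real.pi * |t| := by
      have : 0 < |t| := abs_pos.mpr ht
      positivity
    set φξ : ℝ → ℂ := fun y => ((ψr (y - ξ) : ℝ) : ℂ) with hφξ
    set dφξ : ℝ → ℂ := fun y => ((dψ (y - ξ) : ℝ) : ℂ) with hdφξ
    have hφd : ∀ y : ℝ, HasDerivAt φξ (dφξ y) y := by
      intro y
      have h1 : HasDerivAt (fun s : ℝ => ψr (s - ξ)) (dψ (y - ξ)) y := by
        simpa [Function.comp_def] using (hψrderiv (y - ξ)).comp y ((hasDerivAt_id y).sub_const ξ)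
      exact h1.ofReal_comp
    have hφξcont : Continuous φξ :=
      Complex.continuous_ofReal.comp (hψrcont.comp (continuous_id.sub continuous_const))
    have hdφξcont : Continuous dφξ :=
      Complex.continuous_ofReal.comp (hdψcont.comp (continuous_id.sub continuous_const))
    have hφξs : HasCompactSupport φξ := by
      apply HasCompactSupport.intro (isCompact_Icc (a := ξ - 1) (b := ξ + 1))
      intro y hy
      have h2 := hIcc ξ 1 y hy
      simp [hφξ, hψr0 _ h2.le]
    have hdφξs : HasCompactSupport dφξ := by
      apply HasCompactSupport.intro (isCompact_Icc (a := ξ - 1) (b := ξ + 1))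
      intro y hy
      have h2 := hIcc ξ 1 y hy
      have h3 : y - ξ ∉ Set.Icc (-1:ℝ) 1 := by
        rw [Set.mem_Icc, ← abs_le, not_le]
        exact h2
      simp [hdφξ, hdψ0 _ h3]
    have hI1 := ibp_Ioi c φξ dφξ hφd hφξcont hdφξcont hφξs hdφξs
    have hI2 := ibp_Iic c φξ dφξ hφd hφξcont hdφξcont hφξs hdφξs
    have hsplit : Vsgn ψ ξ t = (∫ y in Set.Ioi (0:ℝ), Complex.exp (c * y) * φξ y)
        - ∫ y in Set.Iic (0:ℝ), Complex.exp (c * y) * φξ y := by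
      rw [Vsgn, ← intervalIntegral.integral_Iic_add_Ioi (b := (0:ℝ)) (hfint ξ t).integrableOn
        (hfint ξ t).integrableOn]
      have hIoi : ∫ y in Set.Ioi (0:ℝ), ((Real.sign y : ℝ):ℂ) * e2pi (-(y * t)) * ψ (y - ξ)
          = ∫ y in Set.Ioi (0:ℝ), Complex.exp (c * y) * φξ y := by
        apply setIntegral_congr_fun measurableSet_Ioi
        intro y hy
        simp only [hψval, Real.sign_of_pos hy, hEeq, hφξ]
        push_cast
        ring
      have hIic : ∫ y in Set.Iic (0:ℝ), ((Real.sign y : ℝ):ℂ) * e2pi (-(y * t)) * ψ (y - ξ)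
          = -∫ y in Set.Iic (0:ℝ), Complex.exp (c * y) * φξ y := by
        rw [integral_Iic_eq_integral_Iio, integral_Iic_eq_integral_Iio, ← integral_neg]
        apply setIntegral_congr_fun measurableSet_Iio
        intro y hy
        simp only [hψval, Real.sign_of_neg hy, hEeq, hφξ, Pi.neg_apply]
        push_cast
        ring
      rw [hIoi, hIic]
      ring
    have hkey : c * Vsgn ψ ξ t = -2 * φξ 0
        - (∫ y in Set.Ioi (0:ℝ), Complex.exp (c * y) * dφξ y)
        + ∫ y in Set.Iic (0:ℝ), Complex.exp (c * y) * dφξ y := by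
      rw [hsplit]
      linear_combination hI1 - hI2
    have hdnorm : ∀ y : ℝ, ‖Complex.exp (c * y) * dφξ y‖ = ‖dψ (y - ξ)‖ := by
      intro y
      rw [norm_mul, ← hEeq, norm_e2pi, one_mul, hdφξ]
      exact Complex.norm_real _
    have hA : ∀ s : Set ℝ, ‖∫ y in s, Complex.exp (c * y) * dφξ y‖ ≤ M := by
      intro s
      calc ‖∫ y in s, Complex.exp (c * y) * dφξ y‖
          ≤ ∫ y in s, ‖dψ (y - ξ)‖ := by
            apply norm_integral_le_of_norm_le ((hdψnormint.comp_sub_right ξ).integrableOn)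
            filter_upwards with y
            rw [hdnorm y]
        _ ≤ ∫ y : ℝ, ‖dψ (y - ξ)‖ := setIntegral_le_integral (hdψnormint.comp_sub_right ξ)
            (Filter.Eventually.of_forall fun y => norm_nonneg _)
        _ = M := integral_sub_right_eq_self (fun y : ℝ => ‖dψ y‖) ξ
    have hφ0 : ‖φξ 0‖ ≤ 1 := by
      rw [hφξ]
      simp only []
      calc ‖((ψr (0 - ξ) : ℝ) : ℂ)‖ = ‖ψr (0 - ξ)‖ := Complex.norm_real _
        _ ≤ 1 := hψabs _
    have hnorm : ‖c‖ * ‖Vsgn ψ ξ t‖ ≤ 2 + 2 * M := by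
      rw [← norm_mul, hkey]
      have e1 : ‖(-2 : ℂ) * φξ 0‖ = 2 * ‖φξ 0‖ := by rw [norm_mul]; norm_num
      calc ‖-2 * φξ 0 - (∫ y in Set.Ioi (0:ℝ), Complex.exp (c * y) * dφξ y)
            + ∫ y in Set.Iic (0:ℝ), Complex.exp (c * y) * dφξ y‖
          ≤ ‖-2 * φξ 0 - (∫ y in Set.Ioi (0:ℝ), Complex.exp (c * y) * dφξ y)‖
            + ‖∫ y in Set.Iic (0:ℝ), Complex.exp (c * y) * dφξ y‖ := norm_add_le _ _
        _ ≤ (‖(-2 : ℂ) * φξ 0‖ + ‖∫ y in Set.Ioi (0:ℝ), Complex.exp (c * y) * dφξ y‖)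
            + ‖∫ y in Set.Iic (0:ℝ), Complex.exp (c * y) * dφξ y‖ := by
            gcongr
            exact norm_sub_le _ _
        _ ≤ 2 + 2 * M := by
            rw [e1]
            have := hA (Set.Ioi (0:ℝ))
            have := hA (Set.Iic (0:ℝ))
            linarith [norm_nonneg (φξ 0), hφ0]
    rw [hcnorm] at hnorm
    rw [le_div_iff₀ hct]
    calc ‖Vsgn ψ ξ t‖ * (2 * Real.pi * |t|) = 2 * Real.pi * |t| * ‖Vsgn ψ ξ t‖ := by ring
      _ ≤ 2 + 2 * M := hnorm
  -- combine the two bounds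
  set C0 : ℝ := (2 + 2 * M) / (2 * Real.pi) with hC0
  have hC00 : 0 ≤ C0 := by
    rw [hC0]; positivity
  set D : ℝ := 2 * B + 2 * C0 with hDdef
  have hD0 : 0 ≤ D := by rw [hDdef]; linarith
  have hfinal : ∀ ξ t : ℝ, ‖Vsgn ψ ξ t‖ ≤ D / (1 + |t|) := by
    intro ξ t
    rcases le_or_gt |t| 1 with h | h
    · have h1 : ‖Vsgn ψ ξ t‖ ≤ B := hbnd1 ξ t
      have h2 : B ≤ D / (1 + |t|) := by
        rw [le_div_iff₀ (by positivity), hDdef]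
        nlinarith [abs_nonneg t]
      linarith
    · have ht : t ≠ 0 := by
        intro h0
        rw [h0] at h
        simp at h
        linarith
      have h1 := hbnd2 ξ t ht
      have h2 : (2 + 2 * M) / (2 * Real.pi * |t|) ≤ D / (1 + |t|) := by
        rw [div_le_div_iff₀ (by positivity) (by positivity)]
        have e1 : C0 * (2 * Real.pi) = 2 + 2 * M := by
          rw [hC0]; field_simp
        rw [hDdef]
        have hX : (0:ℝ) ≤ 2 * Real.pi * |t| := by positivity
        calc (2 + 2 * M) * (1 + |t|) ≤ (2 + 2 * M) * (2 * |t|) := by nlinarith [hM0]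
          _ = 2 * C0 * (2 * Real.pi * |t|) := by rw [← e1]; ring
          _ ≤ (2 * B + 2 * C0) * (2 * Real.pi * |t|) := by nlinarith [mul_nonneg hB0 hX]
      linarith
  have hr0 : (0:ℝ) < r := by linarith
  refine ⟨(∫⁻ t : ℝ, ENNReal.ofReal ((D / (1 + |t|)) ^ r)) ^ (1 / r), ?_, ?_⟩
  · have hint : Integrable (fun t : ℝ => (D / (1 + |t|)) ^ r) := by
      have h1 : Integrable (fun t : ℝ => D ^ r * (1 + ‖t‖) ^ (-r)) :=
        (integrable_one_add_norm (by simpa using hr)).const_mul _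
      apply h1.congr
      filter_upwards with t
      rw [Real.norm_eq_abs, Real.rpow_neg (by positivity),
        Real.div_rpow hD0 (by positivity)]
      rw [div_eq_mul_inv]
    exact ENNReal.rpow_lt_top_of_nonneg (by positivity) hint.lintegral_lt_top.ne
  · intro ξ
    apply ENNReal.rpow_le_rpow _ (by positivity)
    apply lintegral_mono
    intro t
    calc (‖Vsgn ψ ξ t‖₊ : ℝ≥0∞) ^ r = ENNReal.ofReal (‖Vsgn ψ ξ t‖ ^ r) := by
          rw [← enorm_eq_nnnorm, ← ofReal_norm,
            ENNReal.ofReal_rpow_of_nonneg (norm_nonneg _) hr0.le]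
      _ ≤ ENNReal.ofReal ((D / (1 + |t|)) ^ r) := ENNReal.ofReal_le_ofReal
          (Real.rpow_le_rpow (norm_nonneg _) (hfinal ξ t) hr0.le)


end
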